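/- Let (X, σ_X) and (Y, σ_Y) be topologically mixing shifts of finite type, π : X → Y a factor map, α > 0, and φ_n(y) = log |π^{-1}[y_1⋯y_n]|^{1/(α+1)} with Φ = {φ_n}. For each n let ν_n be the Borel probability measure on Y with ν_n([i_1⋯i_n]) = |π^{-1}[i_1⋯i_n]|^{1/(α+1)}/S_n for every n-cylinder [i_1⋯i_n]. Then there exist constants C_1, C_2 > 0 such that for all l, n ∈ ℕ with l > n + M and all cylinders [i_1⋯i_n] in Y, C_1 ≤ ν_l([i_1⋯i_n]) / (e^{−nP(σ_Y,Φ)} |π^{-1}[i_1⋯i_n]|^{1/(α+1)}) ≤ C_2. -/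

import Mathlib

set_option linter.unusedSectionVars false
set_option linter.unusedVariables false
set_option maxHeartbeats 1000000

open MeasureTheory Filter Topology Set
open scoped ENNReal NNReal Classical

namespace Paper

/-- The shift map on the full sequence space over the alphabet `A`. -/
def shiftF (A : Type*) : (ℕ → A) → (ℕ → A) := fun x i => x (i + 1)

/-- A (one-sided) subshift over the alphabet `A`: a closed shift-invariant set of sequences. -/
structure Subshift (A : Type*) [TopologicalSpace A] : Type _ where
  carrier : Set (ℕ → A)
  isClosed : IsClosed carrier
  shift_mem : ∀ x ∈ carrier, shiftF A x ∈ carrier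

section Defs

variable {A B : Type*}
  [Fintype A] [TopologicalSpace A] [DiscreteTopology A]
  [MeasurableSpace A] [MeasurableSingletonClass A]
  [Fintype B] [TopologicalSpace B] [DiscreteTopology B]
  [MeasurableSpace B] [MeasurableSingletonClass B]

/-- The points of a subshift, as a subtype of the full sequence space. -/
abbrev Subshift.pt (X : Subshift A) : Type _ := ↥X.carrier

/-- The shift map of a subshift. -/
def Subshift.σ (X : Subshift A) : X.pt → X.pt :=
  fun x => ⟨shiftF A x.1, X.shift_mem x.1 x.2⟩

/-- `M(X, σ_X)`: the set of shift-invariant Borel probability measures on the subshift. -/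
def invP (X : Subshift A) : Set (ProbabilityMeasure X.pt) :=
  {μ | μ.toMeasure.map X.σ = μ.toMeasure}

/-- The cylinder set `[w₁ ⋯ wₙ]` of a word, inside the subshift. -/
def cyl (X : Subshift A) {n : ℕ} (w : Fin n → A) : Set X.pt :=
  {x | ∀ i : Fin n, x.1 (i : ℕ) = w i}

/-- The entropy of the partition of `X` into cylinders of length `n` w.r.t. `μ`. -/
noncomputable def blockH (X : Subshift A) (μ : ProbabilityMeasure X.pt) (n : ℕ) : ℝ :=
  ∑ w : Fin n → A, Real.negMulLog ((μ.toMeasure (cyl X w)).toReal)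

/-- The Kolmogorov–Sinai entropy `h_μ(σ_X)` of an invariant measure on a subshift: for
invariant measures the sequence `blockH` is subadditive, so the infimum below is the
usual limit `lim (1/n) H_n` over the generating sequence of cylinder partitions. -/
noncomputable def KS (X : Subshift A) (μ : ProbabilityMeasure X.pt) : ℝ :=
  ⨅ n : ℕ, blockH X μ (n + 1) / (n + 1)

/-- A one-block factor map between subshifts, given by a map on symbols. -/
structure Factor (X : Subshift A) (Y : Subshift B) where
  symb : A → B
  mem : ∀ x ∈ X.carrier, (fun i => symb (x i)) ∈ Y.carrier
  surj : ∀ y ∈ Y.carrier, ∃ x ∈ X.carrier, (fun i => symb (x i)) = y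

variable {X : Subshift A} {Y : Subshift B}

/-- The factor map `π : X → Y` induced by the one-block map on symbols. -/
def Factor.map (π : Factor X Y) : X.pt → Y.pt :=
  fun x => ⟨fun i => π.symb (x.1 i), π.mem x.1 x.2⟩

lemma Factor.measurable_map (π : Factor X Y) : Measurable π.map := by
  apply Measurable.subtype_mk
  apply measurable_pi_lambda
  intro i
  exact (measurable_of_countable π.symb).comp
    ((measurable_pi_apply i).comp measurable_subtype_coe)

/-- Push-forward `π μ` of a probability measure under the factor map. -/
noncomputable def Factor.push (π : Factor X Y) (μ : ProbabilityMeasure X.pt) :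
    ProbabilityMeasure Y.pt :=
  μ.map π.measurable_map.aemeasurable

/-- A word is allowable in `X` if it occurs (initially) in some point of `X`. -/
def allowW (X : Subshift A) {n : ℕ} (w : Fin n → A) : Prop :=
  ∃ x ∈ X.carrier, ∀ i : Fin n, x (i : ℕ) = w i

/-- `|π⁻¹[v₁⋯vₙ]|`: the number of allowable `n`-words of `X` mapped by the one-block map
to the word `v`. -/
noncomputable def preCnt (π : Factor X Y) {n : ℕ} (v : Fin n → B) : ℕ :=
  Nat.card {w : Fin n → A // allowW X w ∧ ∀ i, π.symb (w i) = v i}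

/-- `|D_n(y)|`: the number of length-`n` cylinders of `X` meeting the fiber `π⁻¹(y)`. -/
noncomputable def Dcnt (π : Factor X Y) (n : ℕ) (y : Y.pt) : ℕ :=
  Nat.card {w : Fin n → A // ∃ x : X.pt, π.map x = y ∧ ∀ i : Fin n, x.1 (i : ℕ) = w i}

/-- The relative pressure function `P(σ_X, π, 0)(y) = limsup (1/n) log |D_n(y)|`. -/
noncomputable def relP (π : Factor X Y) (y : Y.pt) : ℝ :=
  Filter.limsup (fun n : ℕ => Real.log (Dcnt π n y) / n) Filter.atTop

/-- The function `y ↦ limsup (1/n) log |π⁻¹[y₁⋯yₙ]|`. -/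
noncomputable def relP' (π : Factor X Y) (y : Y.pt) : ℝ :=
  Filter.limsup (fun n : ℕ => Real.log (preCnt π (fun i : Fin n => y.1 (i : ℕ))) / n)
    Filter.atTop

/-- `h_μ(σ) + ∫ f dμ`, as an extended real number. -/
noncomputable def wtF (X : Subshift A) (f : X.pt → ℝ) (μ : ProbabilityMeasure X.pt) : EReal :=
  (KS X μ : EReal) + ((∫ x, f x ∂μ.toMeasure : ℝ) : EReal)

/-- `lim (1/n) ∫ φ_n dμ` for a subadditive sequence `Φ`; for invariant `μ` the limit exists
in `[-∞, ∞)` and equals the infimum below, by subadditivity. -/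
noncomputable def potLim (X : Subshift A) (Φ : ℕ → X.pt → ℝ)
    (μ : ProbabilityMeasure X.pt) : EReal :=
  ⨅ n : ℕ, (((∫ x, Φ (n + 1) x ∂μ.toMeasure) / (n + 1) : ℝ) : EReal)

/-- `h_μ(σ) + ∫ f dμ + lim (1/n) ∫ φ_n dμ`. -/
noncomputable def wtFP (X : Subshift A) (f : X.pt → ℝ) (Φ : ℕ → X.pt → ℝ)
    (μ : ProbabilityMeasure X.pt) : EReal :=
  wtF X f μ + potLim X Φ μ

/-- `h_μ(σ) + lim (1/n) ∫ φ_n dμ`. -/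
noncomputable def wtP (X : Subshift A) (Φ : ℕ → X.pt → ℝ)
    (μ : ProbabilityMeasure X.pt) : EReal :=
  (KS X μ : EReal) + potLim X Φ μ

/-- `h_μ(σ) - lim (1/n) ∫ φ_n dμ`: the weight of the superadditive potential `-Φ`,
for `Φ` subadditive. -/
noncomputable def wtN (X : Subshift A) (Φ : ℕ → X.pt → ℝ)
    (μ : ProbabilityMeasure X.pt) : EReal :=
  (KS X μ : EReal) - potLim X Φ μ

/-- `M_f(X, σ_X)`: equilibrium states of a bounded Borel measurable function `f`. -/
def eqF (X : Subshift A) (f : X.pt → ℝ) : Set (ProbabilityMeasure X.pt) :=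
  {μ | μ ∈ invP X ∧ wtF X f μ = sSup (wtF X f '' invP X)}

/-- `M_{f+Φ}(X, σ_X)`: equilibrium states of `f + Φ`, `Φ` a subadditive potential. -/
def eqFP (X : Subshift A) (f : X.pt → ℝ) (Φ : ℕ → X.pt → ℝ) :
    Set (ProbabilityMeasure X.pt) :=
  {μ | μ ∈ invP X ∧ wtFP X f Φ μ = sSup (wtFP X f Φ '' invP X)}

/-- `M_Φ(X, σ_X)`: equilibrium states of a subadditive potential `Φ`. -/
def eqP (X : Subshift A) (Φ : ℕ → X.pt → ℝ) : Set (ProbabilityMeasure X.pt) :=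
  {μ | μ ∈ invP X ∧ wtP X Φ μ = sSup (wtP X Φ '' invP X)}

/-- `M_{-Φ}(X, σ_X)`: equilibrium states of `-Φ`, for `Φ` a subadditive potential. -/
def eqN (X : Subshift A) (Φ : ℕ → X.pt → ℝ) : Set (ProbabilityMeasure X.pt) :=
  {μ | μ ∈ invP X ∧ wtN X Φ μ = sSup (wtN X Φ '' invP X)}

/-- `μ` is a measure of maximal relative entropy over `m`. -/
def maxRelOver (π : Factor X Y) (m : ProbabilityMeasure Y.pt)
    (μ : ProbabilityMeasure X.pt) : Prop :=
  μ ∈ invP X ∧ π.push μ = m ∧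
    KS X μ = sSup (KS X '' {ν | ν ∈ invP X ∧ π.push ν = m})

/-- A subadditive potential: a sequence of continuous functions satisfying the
subadditivity condition (`Φ n` is the paper's `φ_n` for `n ≥ 1`). -/
def SubAdd (X : Subshift A) (Φ : ℕ → X.pt → ℝ) : Prop :=
  (∀ n : ℕ, 0 < n → Continuous (Φ n)) ∧
  ∀ n m : ℕ, 0 < n → 0 < m → ∀ x : X.pt, Φ (n + m) x ≤ Φ n x + Φ m (X.σ^[n] x)

/-- An almost additive potential. -/
def AlmostAdd (X : Subshift A) (Φ : ℕ → X.pt → ℝ) : Prop :=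
  (∀ n : ℕ, 0 < n → Continuous (Φ n)) ∧
  ∃ C : ℝ, 0 < C ∧ ∀ n m : ℕ, 0 < n → 0 < m → ∀ x : X.pt,
    -C + Φ n x + Φ m (X.σ^[n] x) ≤ Φ (n + m) x ∧
    Φ (n + m) x ≤ C + Φ n x + Φ m (X.σ^[n] x)

/-- The metric on the sequence space: `d(x,y) = (1/2)^k` where `k` is the first index at
which `x` and `y` differ, and `d(x,y) = 0` if `x = y`. -/
noncomputable def dSeq (x y : ℕ → A) : ℝ :=
  if x = y then 0 else (1 / 2 : ℝ) ^ sInf {n : ℕ | x n ≠ y n}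

/-- An `(n, ε)`-separated (finite) subset of the subshift. -/
def SepSet (Y : Subshift B) (n : ℕ) (ε : ℝ) (E : Finset Y.pt) : Prop :=
  ∀ x ∈ E, ∀ y ∈ E, x ≠ y → ∃ i < n, ε < dSeq ((Y.σ^[i] x) : Y.pt).1 ((Y.σ^[i] y) : Y.pt).1

/-- `P_n(σ_Y, Φ, ε)`: the supremum of `∑_{y ∈ E} exp (φ_n y)` over `(n,ε)`-separated
sets `E`. -/
noncomputable def PnV (Y : Subshift B) (Φ : ℕ → Y.pt → ℝ) (n : ℕ) (ε : ℝ) : ℝ :=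
  sSup {r : ℝ | ∃ E : Finset Y.pt, SepSet Y n ε E ∧ r = ∑ y ∈ E, Real.exp (Φ n y)}

/-- The subadditive topological pressure `P(σ_Y, Φ) = lim_{ε→0} limsup (1/n) log P_n(σ,Φ,ε)`;
since the inner quantity is monotone as `ε` decreases, the limit as `ε → 0⁺` is the
supremum over `ε > 0`. -/
noncomputable def Press (Y : Subshift B) (Φ : ℕ → Y.pt → ℝ) : EReal :=
  ⨆ (ε : ℝ) (_ : 0 < ε),
    Filter.limsup (fun n : ℕ => ((Real.log (PnV Y Φ n ε) / n : ℝ) : EReal)) Filter.atTop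

/-- `X` is a shift of finite type (a 1-step topological Markov shift). -/
def IsSFT (X : Subshift A) : Prop :=
  ∃ Tr : A → A → Prop, X.carrier = {x | ∀ i : ℕ, Tr (x i) (x (i + 1))}

/-- `X` is irreducible: any two allowable words can be joined by some connecting word. -/
def Irr (X : Subshift A) : Prop :=
  ∀ (m n : ℕ) (u : Fin m → A) (v : Fin n → A), allowW X u → allowW X v →
    ∃ (k : ℕ) (w : Fin k → A), allowW X (Fin.append (Fin.append u w) v)

/-- `X` is topologically mixing: any two allowable words can be joined by connecting words
of all sufficiently large lengths. -/
def Mix (X : Subshift A) : Prop :=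
  ∀ (m n : ℕ) (u : Fin m → A) (v : Fin n → A), allowW X u → allowW X v →
    ∃ N : ℕ, ∀ k ≥ N, ∃ w : Fin k → A, allowW X (Fin.append (Fin.append u w) v)

/-- `M` is a mixing gap for the SFT `X`: any two symbols occurring in `X` are joined by an
allowable word of length `M + 1` (this encodes `A^M > 0` for the transition matrix `A`). -/
def MixGap (X : Subshift A) (M : ℕ) : Prop :=
  ∀ a b : A, allowW X (fun _ : Fin 1 => a) → allowW X (fun _ : Fin 1 => b) →
    ∃ w : Fin (M + 1) → A, allowW X w ∧ w 0 = a ∧ w (Fin.last M) = b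

/-- A Gibbs measure for the sequence of potentials `Φ` on the subshift `Y`: there are
`C > 0` and `P` with `1/C < μ[y₁⋯yₙ] / exp(-nP + φ_n(y)) < C` for all `y` and `n ≥ 1`. -/
def IsGibbs (Y : Subshift B) (Φ : ℕ → Y.pt → ℝ) (μ : ProbabilityMeasure Y.pt) : Prop :=
  ∃ C : ℝ, 0 < C ∧ ∃ P : ℝ, ∀ n : ℕ, 0 < n → ∀ y : Y.pt,
    1 / C < (μ.toMeasure (cyl Y (fun i : Fin n => y.1 (i : ℕ)))).toReal /
        Real.exp (-(n : ℝ) * P + Φ n y) ∧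
      (μ.toMeasure (cyl Y (fun i : Fin n => y.1 (i : ℕ)))).toReal /
        Real.exp (-(n : ℝ) * P + Φ n y) < C

/-- A measure is mixing for the map `f`. -/
def MixingM {Ω : Type*} [MeasurableSpace Ω] (f : Ω → Ω) (μ : Measure Ω) : Prop :=
  ∀ s t : Set Ω, MeasurableSet s → MeasurableSet t →
    Filter.Tendsto (fun n : ℕ => (μ (s ∩ f^[n] ⁻¹' t)).toReal) Filter.atTop
      (nhds ((μ s).toReal * (μ t).toReal))

/-- The potential `φ_n(y) = log |π⁻¹[y₁⋯yₙ]|^{1/(α+1)}`. -/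
noncomputable def phiPre (π : Factor X Y) (α : ℝ) (n : ℕ) (y : Y.pt) : ℝ :=
  Real.log (((preCnt π (fun i : Fin n => y.1 (i : ℕ)) : ℝ)) ^ (1 / (α + 1) : ℝ))

/-- The potential `φ'_n(y) = log |D_n(y)|^{1/(α+1)}`. -/
noncomputable def phiD (π : Factor X Y) (α : ℝ) (n : ℕ) (y : Y.pt) : ℝ :=
  Real.log (((Dcnt π n y : ℝ)) ^ (1 / (α + 1) : ℝ))

/-- `S_n = ∑_{v ∈ B_n(Y)} |π⁻¹[v]|^{1/(α+1)}` (non-allowable words contribute `0` since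
then `|π⁻¹[v]| = 0`). -/
noncomputable def Sval (π : Factor X Y) (α : ℝ) (n : ℕ) : ℝ :=
  ∑ v : Fin n → B, ((preCnt π v : ℝ)) ^ (1 / (α + 1) : ℝ)

/-- `M_{-F∘π + Φ∘π}(X, σ_X)` for `F = P(σ_X, π, 0)` and `Φ` a subadditive potential
on `Y`. -/
noncomputable def compEq (π : Factor X Y) (Φ : ℕ → Y.pt → ℝ) :
    Set (ProbabilityMeasure X.pt) :=
  eqFP X (fun x => -relP π (π.map x)) (fun n x => Φ n (π.map x))

/-- The weighted entropy functional `h_μ(σ_X) + α h_{πμ}(σ_Y)`. -/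
noncomputable def wtAlpha (π : Factor X Y) (α : ℝ) (μ : ProbabilityMeasure X.pt) : EReal :=
  (KS X μ : EReal) + (α : EReal) * (KS Y (π.push μ) : EReal)

/-- `K_α`: the set of invariant measures maximizing `h_μ(σ_X) + α h_{πμ}(σ_Y)`. -/
noncomputable def Kalpha (π : Factor X Y) (α : ℝ) : Set (ProbabilityMeasure X.pt) :=
  {μ | μ ∈ invP X ∧ wtAlpha π α μ = sSup (wtAlpha π α '' invP X)}

end Defs

/-! ### The torus, the expanding map `T`, and carpets -/

/-- The two-torus. -/
abbrev T2 : Type := AddCircle (1 : ℝ) × AddCircle (1 : ℝ)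

/-- The endomorphism `T(x, y) = (l x mod 1, m y mod 1)` of the torus. -/
noncomputable def Tmap (l m : ℕ) : T2 → T2 := fun p => (l • p.1, m • p.2)

/-- The coding map `χ` associated to the Markov partition of `T`. -/
noncomputable def chi (l m : ℕ) (x : ℕ → Fin l × Fin m) : T2 :=
  (((∑' k : ℕ, (((x k).1 : ℕ) : ℝ) / l ^ (k + 1) : ℝ) : AddCircle (1:ℝ)),
   ((∑' k : ℕ, (((x k).2 : ℕ) : ℝ) / m ^ (k + 1) : ℝ) : AddCircle (1:ℝ)))

/-- The Hausdorff dimension of a measure: the infimum of the Hausdorff dimensions of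
sets of full measure. -/
noncomputable def dimHMeas {Ω : Type*} [EMetricSpace Ω] [MeasurableSpace Ω]
    (μ : Measure Ω) : ℝ≥0∞ :=
  ⨅ (s : Set Ω) (_ : μ s = 1), dimH s

/-- `μ` is a `T`-invariant ergodic Borel probability measure of full Hausdorff
dimension for the compact invariant set `K`. -/
def FullDimErg (l m : ℕ) (K : Set T2) (μ : Measure T2) : Prop :=
  IsProbabilityMeasure μ ∧ Ergodic (Tmap l m) μ ∧ μ K = 1 ∧ dimHMeas μ = dimH K

/-- The coding map restricted to a carpet subshift. -/
noncomputable def chiPt {l m : ℕ} (X : Subshift (Fin l × Fin m)) (x : X.pt) : T2 :=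
  chi l m x.1

/-! ### Auxiliary lemmas for statement 14 -/

section Aux14

variable {A B : Type*}
  [Fintype A] [TopologicalSpace A] [DiscreteTopology A]
  [MeasurableSpace A] [MeasurableSingletonClass A]
  [Fintype B] [TopologicalSpace B] [DiscreteTopology B]
  [MeasurableSpace B] [MeasurableSingletonClass B]
  {X : Subshift A} {Y : Subshift B}

lemma shiftF_iter_apply (x : ℕ → A) (n i : ℕ) : (shiftF A)^[n] x i = x (i + n) := by
  induction n generalizing i with
  | zero => rfl
  | succ n ih =>
    rw [Function.iterate_succ_apply']
    show ((shiftF A)^[n] x) (i + 1) = x (i + (n + 1))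
    rw [ih]
    congr 1
    omega

lemma iter_mem_carrier {x : ℕ → A} (hx : x ∈ X.carrier) (n : ℕ) :
    (shiftF A)^[n] x ∈ X.carrier := by
  induction n with
  | zero => exact hx
  | succ n ih =>
    rw [Function.iterate_succ_apply']
    exact X.shift_mem _ ih

lemma allowW_sub {N n k : ℕ} {w : Fin N → A} (h : allowW X w) (hkn : k + n ≤ N)
    (v : Fin n → A)
    (hv : ∀ i : Fin n, v i = w ⟨k + (i : ℕ), by have := i.isLt; omega⟩) :
    allowW X v := by
  obtain ⟨x, hx, hxw⟩ := h
  refine ⟨(shiftF A)^[k] x, iter_mem_carrier hx k, fun i => ?_⟩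
  rw [shiftF_iter_apply, hv i]
  have h2 := hxw ⟨k + (i : ℕ), by have := i.isLt; omega⟩
  rw [← h2]
  show x ((i : ℕ) + k) = x (k + (i : ℕ))
  congr 1
  omega

lemma allowW_single {N : ℕ} {w : Fin N → A} (h : allowW X w) (j : ℕ) (hj : j < N) :
    allowW X (fun _ : Fin 1 => w ⟨j, hj⟩) := by
  refine allowW_sub h (k := j) (by omega) _ (fun i => ?_)
  congr 1
  apply Fin.ext
  have := i.isLt
  simp only []
  omega

lemma allowW_word_of_mem {x : ℕ → A} (hx : x ∈ X.carrier) (n : ℕ) :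
    allowW X (fun i : Fin n => x (i : ℕ)) :=
  ⟨x, hx, fun _ => rfl⟩

lemma allowW_image (π : Factor X Y) {n : ℕ} {w : Fin n → A} (hw : allowW X w) :
    allowW Y (fun i => π.symb (w i)) := by
  obtain ⟨x, hx, hxw⟩ := hw
  exact ⟨_, π.mem x hx, fun i => congrArg π.symb (hxw i)⟩

lemma one_le_preCnt (π : Factor X Y) {n : ℕ} {v : Fin n → B} (hv : allowW Y v) :
    1 ≤ preCnt π v := by
  obtain ⟨y, hy, hyv⟩ := hv
  obtain ⟨x, hx, hxy⟩ := π.surj y hy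
  have hne : Nonempty {w : Fin n → A // allowW X w ∧ ∀ i, π.symb (w i) = v i} := by
    refine ⟨⟨fun i => x (i : ℕ), allowW_word_of_mem hx n, fun i => ?_⟩⟩
    have h1 : π.symb (x (i : ℕ)) = y (i : ℕ) := congrFun hxy (i : ℕ)
    rw [h1, hyv i]
  exact Nat.card_pos

lemma allowW_of_preCnt_ne_zero (π : Factor X Y) {n : ℕ} {v : Fin n → B}
    (h : preCnt π v ≠ 0) : allowW Y v := by
  have hne : Nonempty {w : Fin n → A // allowW X w ∧ ∀ i, π.symb (w i) = v i} :=
    (Nat.card_ne_zero.mp h).1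
  obtain ⟨⟨w, hw, hwv⟩⟩ := hne
  have himg := allowW_image π hw
  have he : (fun i => π.symb (w i)) = v := funext hwv
  rwa [he] at himg

/-- Concatenation of two words. -/
def wcat {C : Type*} {n m : ℕ} (u : Fin n → C) (v : Fin m → C) : Fin (n + m) → C :=
  fun i => if h : (i : ℕ) < n then u ⟨i, h⟩ else v ⟨(i : ℕ) - n, by have := i.isLt; omega⟩

/-- Splitting equivalence for words. -/
def wsplit (C : Type*) (n m : ℕ) : ((Fin n → C) × (Fin m → C)) ≃ (Fin (n + m) → C) where
  toFun p := wcat p.1 p.2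
  invFun w := (fun i => w ⟨(i : ℕ), by have := i.isLt; omega⟩,
               fun i => w ⟨n + (i : ℕ), by have := i.isLt; omega⟩)
  left_inv p := by
    refine Prod.ext (funext fun i => ?_) (funext fun i => ?_)
    · show wcat p.1 p.2 ⟨(i : ℕ), _⟩ = p.1 i
      rw [wcat, dif_pos i.isLt]
    · show wcat p.1 p.2 ⟨n + (i : ℕ), _⟩ = p.2 i
      rw [wcat, dif_neg (show ¬ n + (i : ℕ) < n by omega)]
      exact congrArg p.2 (Fin.ext (show n + (i : ℕ) - n = (i : ℕ) by omega))
  right_inv w := by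
    funext i
    by_cases h : (i : ℕ) < n
    · show wcat _ _ i = w i
      rw [wcat, dif_pos h]
    · show wcat _ _ i = w i
      rw [wcat, dif_neg h]
      exact congrArg w (Fin.ext (show n + ((i : ℕ) - n) = (i : ℕ) by
        have := i.isLt; omega))

lemma sum_wcat {C : Type*} [Fintype C] {n m : ℕ} (F : (Fin (n + m) → C) → ℝ) :
    ∑ w : Fin (n + m) → C, F w = ∑ u : Fin n → C, ∑ t : Fin m → C, F (wcat u t) := by
  have h1 : ∑ p : (Fin n → C) × (Fin m → C), F (wcat p.1 p.2) = ∑ w, F w :=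
    Fintype.sum_equiv (wsplit C n m) (fun p => F (wcat p.1 p.2)) F fun p => rfl
  rw [← h1, Fintype.sum_prod_type]

lemma preCnt_wcat_le (π : Factor X Y) {n m : ℕ} (u : Fin n → B) (v : Fin m → B) :
    preCnt π (wcat u v) ≤ preCnt π u * preCnt π v := by
  refine le_trans (b := Nat.card
      ({w : Fin n → A // allowW X w ∧ ∀ i, π.symb (w i) = u i} ×
       {w : Fin m → A // allowW X w ∧ ∀ i, π.symb (w i) = v i}))
    ?_ (le_of_eq (Nat.card_prod _ _))
  refine Nat.card_le_card_of_injective (fun w =>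
    (⟨fun i => w.1 ⟨(i : ℕ), by have := i.isLt; omega⟩,
      allowW_sub w.2.1 (k := 0) (by omega) _ (fun i =>
        congrArg w.1 (Fin.ext (show (i : ℕ) = 0 + (i : ℕ) by omega))),
      fun i => by
        have h := w.2.2 ⟨(i : ℕ), by have := i.isLt; omega⟩
        rw [wcat, dif_pos (show ((⟨(i : ℕ), _⟩ : Fin (n + m)) : ℕ) < n from i.isLt)] at h
        simpa using h⟩,
     ⟨fun i => w.1 ⟨n + (i : ℕ), by have := i.isLt; omega⟩,
      allowW_sub w.2.1 (k := n) (by omega) _ (fun i => rfl),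
      fun i => by
        have h := w.2.2 ⟨n + (i : ℕ), by have := i.isLt; omega⟩
        rw [wcat, dif_neg (show ¬ n + (i : ℕ) < n by omega)] at h
        rw [h]
        exact congrArg v (Fin.ext (show n + (i : ℕ) - n = (i : ℕ) by omega))⟩)) ?_
  rintro ⟨w, hw⟩ ⟨w', hw'⟩ h
  have h1 := congrArg (fun p => p.1.1) h
  have h2 := congrArg (fun p => p.2.1) h
  simp only [] at h1 h2
  apply Subtype.ext
  funext i
  by_cases hi : (i : ℕ) < n
  · have := congrFun h1 ⟨(i : ℕ), hi⟩
    simpa [Fin.eta] using this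
  · have := congrFun h2 ⟨(i : ℕ) - n, by have := i.isLt; omega⟩
    simp only [] at this
    have he : (⟨n + ((i : ℕ) - n), by have := i.isLt; omega⟩ : Fin (n + m)) = i := by
      apply Fin.ext
      simp only []
      omega
    rwa [he] at this

lemma wcat_left {C : Type*} {n m : ℕ} (u : Fin n → C) (v : Fin m → C) (i : Fin (n + m))
    (h : (i : ℕ) < n) : wcat u v i = u ⟨(i : ℕ), h⟩ := dif_pos h

lemma wcat_right {C : Type*} {n m : ℕ} (u : Fin n → C) (v : Fin m → C) (i : Fin (n + m))
    (h : ¬ (i : ℕ) < n) :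
    wcat u v i = v ⟨(i : ℕ) - n, by have := i.isLt; omega⟩ := dif_neg h

lemma nat_card_sigma {ι : Type*} [Fintype ι] (S : ι → Type*) [∀ i, Finite (S i)] :
    Nat.card (Σ i, S i) = ∑ i, Nat.card (S i) := by
  classical
  letI : ∀ i, Fintype (S i) := fun i => Fintype.ofFinite _
  simp [Nat.card_eq_fintype_card]

lemma mixGap_succ {M : ℕ} (hXS : IsSFT X) (hM : MixGap X M) : MixGap X (M + 1) := by
  obtain ⟨Tr, hTr⟩ := hXS
  have TrP : ∀ x ∈ X.carrier, ∀ i : ℕ, Tr (x i) (x (i + 1)) := by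
    intro x hx
    rw [hTr] at hx
    exact hx
  intro a b ha hb
  obtain ⟨x, hx, hxa⟩ := ha
  have hx0 : x 0 = a := hxa ⟨0, Nat.zero_lt_one⟩
  have ha' : allowW X (fun _ : Fin 1 => x 1) := by
    refine ⟨shiftF A x, X.shift_mem x hx, fun i => ?_⟩
    show x ((i : ℕ) + 1) = x 1
    congr 1
    have := i.isLt
    omega
  obtain ⟨w, hw, hw0, hwl⟩ := hM (x 1) b ha' hb
  obtain ⟨q, hq, hqw⟩ := hw
  set z : ℕ → A := fun i => if i = 0 then a else q (i - 1) with hzdef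
  have hzmem : z ∈ X.carrier := by
    rw [hTr]
    intro i
    rcases Nat.eq_zero_or_pos i with h0 | h0
    · subst h0
      have e0 : z 0 = a := by simp [hzdef]
      have e1 : z 1 = q 0 := by simp [hzdef]
      rw [e0, e1]
      have hq0 : q 0 = x 1 := by
        have h := hqw ⟨0, by omega⟩
        rw [h]
        have : (⟨0, by omega⟩ : Fin (M + 1)) = 0 := Fin.ext (by simp)
        rw [this, hw0]
      rw [hq0, ← hx0]
      exact TrP x hx 0
    · have e0 : z i = q (i - 1) := by
        simp only [hzdef]
        rw [if_neg (by omega)]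
      have e1 : z (i + 1) = q ((i - 1) + 1) := by
        simp only [hzdef]
        rw [if_neg (by omega)]
        congr 1
        omega
      rw [e0, e1]
      exact TrP q hq (i - 1)
  refine ⟨fun i : Fin (M + 1 + 1) => z (i : ℕ), ⟨z, hzmem, fun i => rfl⟩, ?_, ?_⟩
  · show z ((0 : Fin (M + 1 + 1)) : ℕ) = a
    simp [hzdef]
  · show z ((Fin.last (M + 1) : Fin (M + 1 + 1)) : ℕ) = b
    have hlv : ((Fin.last (M + 1) : Fin (M + 1 + 1)) : ℕ) = M + 1 := rfl
    rw [hlv]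
    have e : z (M + 1) = q M := by
      simp only [hzdef]
      rw [if_neg (by omega)]
      congr 1
    rw [e]
    have h := hqw ⟨M, by omega⟩
    rw [h]
    have : (⟨M, by omega⟩ : Fin (M + 1)) = Fin.last M := Fin.ext (by simp)
    rw [this, hwl]

lemma glue_count (π : Factor X Y) (hXS : IsSFT X) {G : ℕ} (hGap : MixGap X (G + 1))
    {n m : ℕ} (hn : 0 < n) (hm : 0 < m) (v : Fin n → B) (v' : Fin m → B) :
    preCnt π v * preCnt π v' ≤ ∑ t : Fin G → B, preCnt π (wcat v (wcat t v')) := by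
  classical
  obtain ⟨Tr, hTr⟩ := hXS
  have TrP : ∀ x ∈ X.carrier, ∀ i : ℕ, Tr (x i) (x (i + 1)) := by
    intro x hx
    rw [hTr] at hx
    exact hx
  have main : ∀ a : Fin n → A, ∀ b : Fin m → A,
      allowW X a → (∀ i, π.symb (a i) = v i) →
      allowW X b → (∀ i, π.symb (b i) = v' i) →
      ∃ w : Fin (n + (G + m)) → A, allowW X w ∧
        (∀ i, π.symb (w i) =
          wcat v (wcat (fun j : Fin G =>
            π.symb (w ⟨n + (j : ℕ), by have := j.isLt; omega⟩)) v') i) ∧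
        (∀ i : Fin n, w ⟨(i : ℕ), by have := i.isLt; omega⟩ = a i) ∧
        (∀ i : Fin m, w ⟨n + G + (i : ℕ), by have := i.isLt; omega⟩ = b i) := by
    intro a b ha hav hb hbv
    obtain ⟨xa, hxa, hxaa⟩ := id ha
    obtain ⟨yb, hyb, hybb⟩ := id hb
    have hs : allowW X (fun _ : Fin 1 => a ⟨n - 1, by omega⟩) :=
      allowW_single ha (n - 1) (by omega)
    have htt : allowW X (fun _ : Fin 1 => b ⟨0, hm⟩) := allowW_single hb 0 hm
    obtain ⟨p, hpal, hp0, hpl⟩ := hGap _ _ hs htt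
    obtain ⟨q, hq, hqp⟩ := id hpal
    set z : ℕ → A := fun i =>
      if h1 : i < n then a ⟨i, h1⟩
      else if h2 : i < n + G then p ⟨i - n + 1, by omega⟩
      else yb (i - (n + G)) with hzdef
    have hzval : ∀ j (hj1 : n - 1 ≤ j) (hj2 : j ≤ n + G), z j = p ⟨j - (n - 1), by omega⟩ := by
      intro j hj1 hj2
      by_cases h1 : j < n
      · have e : z j = a ⟨j, h1⟩ := by
          simp only [hzdef]
          rw [dif_pos h1]
        rw [e]
        have hidx : (⟨j - (n - 1), by omega⟩ : Fin (G + 1 + 1)) = 0 :=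
          Fin.ext (show j - (n - 1) = 0 by omega)
        rw [hidx, hp0]
        exact congrArg a (Fin.ext (show j = n - 1 by omega))
      · by_cases h2 : j < n + G
        · have e : z j = p ⟨j - n + 1, by omega⟩ := by
            simp only [hzdef]
            rw [dif_neg h1, dif_pos h2]
          rw [e]
          exact congrArg p (Fin.ext (show j - n + 1 = j - (n - 1) by omega))
        · have e : z j = yb (j - (n + G)) := by
            simp only [hzdef]
            rw [dif_neg h1, dif_neg h2]
          rw [e]
          have h0 : j - (n + G) = 0 := by omega
          rw [h0]
          have hyb0 : yb 0 = b ⟨0, hm⟩ := hybb ⟨0, hm⟩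
          rw [hyb0, ← hpl]
          exact congrArg p (Fin.ext (show ((Fin.last (G + 1) : Fin (G + 1 + 1)) : ℕ)
            = j - (n - 1) by simp; omega))
    have hzmem : z ∈ X.carrier := by
      rw [hTr]
      intro i
      rcases lt_or_ge (i + 1) n with h | h
      · have hi : i < n := by omega
        have e1 : z i = a ⟨i, hi⟩ := by
          simp only [hzdef]
          rw [dif_pos hi]
        have e2 : z (i + 1) = a ⟨i + 1, h⟩ := by
          simp only [hzdef]
          rw [dif_pos h]
        rw [e1, e2, ← hxaa ⟨i, hi⟩, ← hxaa ⟨i + 1, h⟩]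
        exact TrP xa hxa i
      · rcases lt_or_ge i (n + G) with h2 | h2
        · have e1 : z i = p ⟨i - (n - 1), by omega⟩ := hzval i (by omega) (by omega)
          have e2 : z (i + 1) = p ⟨(i + 1) - (n - 1), by omega⟩ :=
            hzval (i + 1) (by omega) (by omega)
          rw [e1, e2]
          rw [show (⟨(i + 1) - (n - 1), by omega⟩ : Fin (G + 1 + 1))
              = ⟨(i - (n - 1)) + 1, by omega⟩ from
            Fin.ext (show (i + 1) - (n - 1) = (i - (n - 1)) + 1 by omega)]
          rw [← hqp ⟨i - (n - 1), by omega⟩, ← hqp ⟨(i - (n - 1)) + 1, by omega⟩]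
          exact TrP q hq (i - (n - 1))
        · have e1 : z i = yb (i - (n + G)) := by
            simp only [hzdef]
            rw [dif_neg (by omega), dif_neg (by omega)]
          have e2 : z (i + 1) = yb ((i - (n + G)) + 1) := by
            simp only [hzdef]
            rw [dif_neg (by omega), dif_neg (by omega)]
            congr 1
            omega
          rw [e1, e2]
          exact TrP yb hyb (i - (n + G))
    refine ⟨fun i : Fin (n + (G + m)) => z (i : ℕ), ⟨z, hzmem, fun i => rfl⟩, ?_, ?_, ?_⟩
    · intro i
      rcases lt_or_ge (i : ℕ) n with h | h
      · rw [wcat_left v _ i h]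
        have e : z (i : ℕ) = a ⟨(i : ℕ), h⟩ := by
          simp only [hzdef]
          rw [dif_pos h]
        show π.symb (z (i : ℕ)) = v ⟨(i : ℕ), h⟩
        rw [e]
        exact hav ⟨(i : ℕ), h⟩
      · rcases lt_or_ge (i : ℕ) (n + G) with h2 | h2
        · rw [wcat_right v _ i (by omega)]
          rw [wcat_left _ v' _ (show (i : ℕ) - n < G by omega)]
          show π.symb (z (i : ℕ)) = π.symb (z (n + ((i : ℕ) - n)))
          exact congrArg π.symb (congrArg z (by omega))
        · rw [wcat_right v _ i (by omega)]
          rw [wcat_right _ v' _ (show ¬ (i : ℕ) - n < G by omega)]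
          have e : z (i : ℕ) = yb ((i : ℕ) - (n + G)) := by
            simp only [hzdef]
            rw [dif_neg (by omega), dif_neg (by omega)]
          show π.symb (z (i : ℕ)) = v' ⟨(i : ℕ) - n - G, by have := i.isLt; omega⟩
          rw [e]
          have hyb' : yb ((i : ℕ) - (n + G)) = b ⟨(i : ℕ) - (n + G), by have := i.isLt; omega⟩ :=
            hybb ⟨(i : ℕ) - (n + G), by have := i.isLt; omega⟩
          rw [hyb', hbv ⟨(i : ℕ) - (n + G), by have := i.isLt; omega⟩]
          exact congrArg v' (Fin.ext (show (i : ℕ) - (n + G) = (i : ℕ) - n - G by omega))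
    · intro i
      show z ((i : ℕ)) = a i
      simp only [hzdef]
      rw [dif_pos i.isLt]
      all_goals exact congrArg a (Fin.ext rfl)
    · intro i
      show z (n + G + (i : ℕ)) = b i
      simp only [hzdef]
      rw [dif_neg (by omega), dif_neg (by omega)]
      have he : n + G + (i : ℕ) - (n + G) = (i : ℕ) := by omega
      rw [he]
      exact hybb i
  have hinj : preCnt π v * preCnt π v' ≤
      Nat.card (Σ t : Fin G → B,
        {w : Fin (n + (G + m)) → A // allowW X w ∧
          ∀ i, π.symb (w i) = wcat v (wcat t v') i}) := by
    choose w hw1 hw2 hw3 hw4 using main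
    refine le_trans (le_of_eq (Nat.card_prod _ _).symm) (Nat.card_le_card_of_injective
      (fun ab : {w : Fin n → A // allowW X w ∧ ∀ i, π.symb (w i) = v i} ×
                {w : Fin m → A // allowW X w ∧ ∀ i, π.symb (w i) = v' i} =>
        ⟨fun j : Fin G => π.symb (w ab.1.1 ab.2.1 ab.1.2.1 ab.1.2.2 ab.2.2.1 ab.2.2.2
            ⟨n + (j : ℕ), by have := j.isLt; omega⟩),
         ⟨w ab.1.1 ab.2.1 ab.1.2.1 ab.1.2.2 ab.2.2.1 ab.2.2.2,
          hw1 ab.1.1 ab.2.1 ab.1.2.1 ab.1.2.2 ab.2.2.1 ab.2.2.2,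
          hw2 ab.1.1 ab.2.1 ab.1.2.1 ab.1.2.2 ab.2.2.1 ab.2.2.2⟩⟩) ?_)
    rintro ⟨⟨a, ha1, ha2⟩, ⟨b, hb1, hb2⟩⟩ ⟨⟨a', ha1', ha2'⟩, ⟨b', hb1', hb2'⟩⟩ h
    have hww : w a b ha1 ha2 hb1 hb2 = w a' b' ha1' ha2' hb1' hb2' :=
      congrArg (fun s => s.2.1) h
    refine Prod.ext (Subtype.ext (funext fun i => ?_)) (Subtype.ext (funext fun i => ?_))
    · show a i = a' i
      have e1 := hw3 a b ha1 ha2 hb1 hb2 i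
      have e2 := hw3 a' b' ha1' ha2' hb1' hb2' i
      rw [← e1, ← e2, hww]
    · show b i = b' i
      have e1 := hw4 a b ha1 ha2 hb1 hb2 i
      have e2 := hw4 a' b' ha1' ha2' hb1' hb2' i
      rw [← e1, ← e2, hww]
  refine le_trans hinj (le_of_eq ?_)
  rw [nat_card_sigma]
  rfl

lemma real_rpow_add_le {θ : ℝ} (hθ0 : 0 ≤ θ) (hθ1 : θ ≤ 1) {x y : ℝ} (hx : 0 ≤ x) (hy : 0 ≤ y) :
    (x + y) ^ θ ≤ x ^ θ + y ^ θ := by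
  have h := NNReal.rpow_add_le_add_rpow x.toNNReal y.toNNReal hθ0 hθ1
  have hxy : ((x.toNNReal + y.toNNReal : ℝ≥0) : ℝ) = x + y := by
    simp [Real.coe_toNNReal _ hx, Real.coe_toNNReal _ hy]
  calc (x + y) ^ θ = (((x.toNNReal + y.toNNReal : ℝ≥0) : ℝ)) ^ θ := by rw [hxy]
    _ = (((x.toNNReal + y.toNNReal) ^ θ : ℝ≥0) : ℝ) := (NNReal.coe_rpow _ _).symm
    _ ≤ ((x.toNNReal ^ θ + y.toNNReal ^ θ : ℝ≥0) : ℝ) := by exact_mod_cast h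
    _ = x ^ θ + y ^ θ := by
        push_cast
        rw [Real.coe_toNNReal _ hx, Real.coe_toNNReal _ hy]

lemma rpow_sum_le_sum_rpow {ι : Type*} (s : Finset ι) (f : ι → ℝ) {θ : ℝ}
    (hθ0 : 0 < θ) (hθ1 : θ ≤ 1) (hf : ∀ i ∈ s, 0 ≤ f i) :
    (∑ i ∈ s, f i) ^ θ ≤ ∑ i ∈ s, f i ^ θ := by
  classical
  induction s using Finset.cons_induction with
  | empty => simp [Real.zero_rpow hθ0.ne']
  | cons a s ha ih =>
    rw [Finset.sum_cons, Finset.sum_cons]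
    have h1 : 0 ≤ f a := hf a (Finset.mem_cons_self a s)
    have h2 : ∀ i ∈ s, 0 ≤ f i := fun i hi => hf i (Finset.mem_cons_of_mem hi)
    calc (f a + ∑ i ∈ s, f i) ^ θ ≤ f a ^ θ + (∑ i ∈ s, f i) ^ θ :=
          real_rpow_add_le hθ0.le hθ1 h1 (Finset.sum_nonneg h2)
      _ ≤ f a ^ θ + ∑ i ∈ s, f i ^ θ := add_le_add_right (ih h2) _

lemma cyl_measurableSet (Y : Subshift B) {k : ℕ} (w : Fin k → B) :
    MeasurableSet (cyl Y w) := by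
  have he : cyl Y w = ⋂ i : Fin k, (fun y : Y.pt => y.1 (i : ℕ)) ⁻¹' {w i} := by
    ext y
    simp [cyl, Set.mem_iInter]
  rw [he]
  exact MeasurableSet.iInter fun i =>
    ((measurable_pi_apply ((i : ℕ))).comp measurable_subtype_coe) (measurableSet_singleton _)

lemma meas_cyl_decomp (μ : ProbabilityMeasure Y.pt) {n m : ℕ} (v : Fin n → B) :
    (μ.toMeasure (cyl Y v)).toReal
      = ∑ u : Fin m → B, (μ.toMeasure (cyl Y (wcat v u))).toReal := by
  classical
  have hset : cyl Y v = ⋃ u : Fin m → B, cyl Y (wcat v u) := by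
    ext y
    constructor
    · intro hy
      refine Set.mem_iUnion.mpr ⟨fun j => y.1 (n + (j : ℕ)), fun i => ?_⟩
      by_cases h : (i : ℕ) < n
      · rw [wcat_left v _ i h]
        exact hy ⟨(i : ℕ), h⟩
      · rw [wcat_right v _ i h]
        exact congrArg y.1 (show (i : ℕ) = n + ((i : ℕ) - n) by omega)
    · intro hy
      obtain ⟨u, hu⟩ := Set.mem_iUnion.mp hy
      intro i
      have h := hu ⟨(i : ℕ), by have := i.isLt; omega⟩
      rw [wcat_left v u _ i.isLt] at h
      exact h.trans (congrArg v (Fin.ext rfl))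
  have hdisj : Pairwise (Function.onFun Disjoint fun u : Fin m → B => cyl Y (wcat v u)) := by
    intro u u' huu'
    simp only [Function.onFun]
    rw [Set.disjoint_left]
    intro y hyu hyu'
    apply huu'
    funext j
    have h1 := hyu ⟨n + (j : ℕ), by have := j.isLt; omega⟩
    have h2 := hyu' ⟨n + (j : ℕ), by have := j.isLt; omega⟩
    rw [wcat_right v u _ (show ¬ n + (j : ℕ) < n by omega)] at h1
    rw [wcat_right v u' _ (show ¬ n + (j : ℕ) < n by omega)] at h2
    have h3 : u ⟨n + (j : ℕ) - n, by have := j.isLt; omega⟩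
        = u' ⟨n + (j : ℕ) - n, by have := j.isLt; omega⟩ := by
      rw [← h1, ← h2]
    calc u j = u ⟨n + (j : ℕ) - n, by have := j.isLt; omega⟩ :=
          congrArg u (Fin.ext (show (j : ℕ) = n + (j : ℕ) - n by omega))
      _ = u' ⟨n + (j : ℕ) - n, by have := j.isLt; omega⟩ := h3
      _ = u' j := congrArg u' (Fin.ext (show n + (j : ℕ) - n = (j : ℕ) by omega))
  rw [hset, measure_iUnion hdisj (fun u => cyl_measurableSet Y _), tsum_fintype]
  exact ENNReal.toReal_sum fun u _ => measure_ne_top _ _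

section SvalLemmas

variable (π : Factor X Y) {α : ℝ}

lemma Sval_term_nonneg {k : ℕ} (w : Fin k → B) : 0 ≤ ((preCnt π w : ℝ)) ^ (1 / (α + 1) : ℝ) :=
  Real.rpow_nonneg (Nat.cast_nonneg _) _

lemma Sval_nonneg (k : ℕ) : 0 ≤ Sval π α k :=
  Finset.sum_nonneg fun w _ => Sval_term_nonneg π w

lemma one_le_Sval (hY : Nonempty Y.pt) (hα : 0 < α) (k : ℕ) : 1 ≤ Sval π α k := by
  obtain ⟨y⟩ := hY
  have hv : allowW Y (fun i : Fin k => y.1 (i : ℕ)) := ⟨y.1, y.2, fun _ => rfl⟩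
  have h1 : 1 ≤ preCnt π (fun i : Fin k => y.1 (i : ℕ)) := one_le_preCnt π hv
  have h2 : (1 : ℝ) ≤ ((preCnt π (fun i : Fin k => y.1 (i : ℕ)) : ℝ)) ^ (1 / (α + 1) : ℝ) := by
    calc (1 : ℝ) = (1 : ℝ) ^ (1 / (α + 1) : ℝ) := (Real.one_rpow _).symm
      _ ≤ _ := Real.rpow_le_rpow zero_le_one (by exact_mod_cast h1) (by positivity)
  exact le_trans h2 (Finset.single_le_sum (fun w _ => Sval_term_nonneg π w) (Finset.mem_univ _))

lemma Sval_subadd (hα : 0 < α) (n m : ℕ) : Sval π α (n + m) ≤ Sval π α n * Sval π α m := by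
  have hθ : (0:ℝ) ≤ 1 / (α + 1) := by positivity
  rw [Sval, sum_wcat (fun w : Fin (n + m) → B => ((preCnt π w : ℝ)) ^ (1 / (α + 1) : ℝ))]
  rw [Sval, Sval, Finset.sum_mul_sum]
  refine Finset.sum_le_sum fun u _ => Finset.sum_le_sum fun t _ => ?_
  calc ((preCnt π (wcat u t) : ℝ)) ^ (1 / (α + 1) : ℝ)
      ≤ ((preCnt π u * preCnt π t : ℕ) : ℝ) ^ (1 / (α + 1) : ℝ) :=
        Real.rpow_le_rpow (Nat.cast_nonneg _) (by exact_mod_cast preCnt_wcat_le π u t) hθ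
    _ = ((preCnt π u : ℝ)) ^ (1 / (α + 1) : ℝ) * ((preCnt π t : ℝ)) ^ (1 / (α + 1) : ℝ) := by
        push_cast
        exact Real.mul_rpow (Nat.cast_nonneg _) (Nat.cast_nonneg _)

lemma glue_sum (hXS : IsSFT X) {G : ℕ} (hGap : MixGap X (G + 1)) (hα : 0 < α)
    {n m : ℕ} (hn : 0 < n) (hm : 0 < m) (v : Fin n → B) :
    ((preCnt π v : ℝ)) ^ (1 / (α + 1) : ℝ) * Sval π α m
      ≤ ∑ u : Fin (G + m) → B, ((preCnt π (wcat v u) : ℝ)) ^ (1 / (α + 1) : ℝ) := by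
  have hθ0 : (0:ℝ) < 1 / (α + 1) := by positivity
  have hθ1 : (1 / (α + 1) : ℝ) ≤ 1 := by
    rw [div_le_one (by linarith)]
    linarith
  rw [sum_wcat (fun u : Fin (G + m) → B => ((preCnt π (wcat v u) : ℝ)) ^ (1 / (α + 1) : ℝ))]
  rw [Finset.sum_comm]
  rw [Sval, Finset.mul_sum]
  refine Finset.sum_le_sum fun v' _ => ?_
  calc ((preCnt π v : ℝ)) ^ (1 / (α + 1) : ℝ) * ((preCnt π v' : ℝ)) ^ (1 / (α + 1) : ℝ)
      = ((preCnt π v * preCnt π v' : ℕ) : ℝ) ^ (1 / (α + 1) : ℝ) := by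
        push_cast
        exact (Real.mul_rpow (Nat.cast_nonneg _) (Nat.cast_nonneg _)).symm
    _ ≤ ((∑ t : Fin G → B, preCnt π (wcat v (wcat t v')) : ℕ) : ℝ) ^ (1 / (α + 1) : ℝ) :=
        Real.rpow_le_rpow (Nat.cast_nonneg _)
          (by exact_mod_cast glue_count π hXS hGap hn hm v v') hθ0.le
    _ ≤ ∑ t : Fin G → B, ((preCnt π (wcat v (wcat t v')) : ℝ)) ^ (1 / (α + 1) : ℝ) := by
        rw [Nat.cast_sum]
        exact rpow_sum_le_sum_rpow _ _ hθ0 hθ1 fun t _ => Nat.cast_nonneg _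

lemma Sval_superadd (hXS : IsSFT X) {G : ℕ} (hGap : MixGap X (G + 1)) (hα : 0 < α)
    {n m : ℕ} (hn : 0 < n) (hm : 0 < m) :
    Sval π α n * Sval π α m ≤ Sval π α (n + (G + m)) := by
  have hS : Sval π α (n + (G + m))
      = ∑ w : Fin (n + (G + m)) → B, ((preCnt π w : ℝ)) ^ (1 / (α + 1) : ℝ) := rfl
  rw [hS, sum_wcat (fun w : Fin (n + (G + m)) → B => ((preCnt π w : ℝ)) ^ (1 / (α + 1) : ℝ))]
  rw [Sval, Finset.sum_mul]
  exact Finset.sum_le_sum fun v _ => glue_sum π hXS hGap hα hn hm v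

end SvalLemmas

end Aux14


/-- Lemma: uniform Gibbs-type bounds for the approximating measures
`ν_l`, which give mass `|π⁻¹[i₁⋯iₙ]|^{1/(α+1)}/S_n` to each `n`-cylinder, evaluated on
shorter cylinders `[i₁⋯iₙ]` with `l > n + M`. -/
theorem statement14
    {A B : Type*}
    [Fintype A] [TopologicalSpace A] [DiscreteTopology A]
    [MeasurableSpace A] [MeasurableSingletonClass A]
    [Fintype B] [TopologicalSpace B] [DiscreteTopology B]
    [MeasurableSpace B] [MeasurableSingletonClass B]
    (X : Subshift A) (Y : Subshift B) (π : Factor X Y)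
    (hXS : IsSFT X) (hYS : IsSFT Y) (hXM : Mix X) (hYM : Mix Y)
    (M : ℕ) (hM : MixGap X M)
    (α : ℝ) (hα : 0 < α)
    (P : ℝ)
    (hP : Filter.Tendsto (fun n : ℕ => Real.log (Sval π α n) / n) Filter.atTop (nhds P))
    (ν : ℕ → ProbabilityMeasure Y.pt)
    (hν : ∀ n : ℕ, 0 < n → ∀ v : Fin n → B,
      ((ν n).toMeasure (cyl Y v)).toReal
        = (preCnt π v : ℝ) ^ (1 / (α + 1) : ℝ) / Sval π α n) :
    ∃ C₁ C₂ : ℝ, 0 < C₁ ∧ 0 < C₂ ∧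
      ∀ l n : ℕ, 0 < n → n + M < l → ∀ v : Fin n → B, allowW Y v →
        C₁ ≤ ((ν l).toMeasure (cyl Y v)).toReal /
            (Real.exp (-(n : ℝ) * P) * (preCnt π v : ℝ) ^ (1 / (α + 1) : ℝ)) ∧
        ((ν l).toMeasure (cyl Y v)).toReal /
            (Real.exp (-(n : ℝ) * P) * (preCnt π v : ℝ) ^ (1 / (α + 1) : ℝ)) ≤ C₂ := by
  classical
  have hYne : Nonempty Y.pt := by
    by_contra h
    have h1 : (ν 1).toMeasure Set.univ = 1 := measure_univ
    rw [Set.univ_eq_empty_iff.mpr (not_nonempty_iff.mp h)] at h1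
    simp at h1
  have hθ0 : (0:ℝ) < 1 / (α + 1) := by positivity
  have hθ1 : (1 / (α + 1) : ℝ) ≤ 1 := by
    rw [div_le_one (by linarith)]
    linarith
  have hGap : MixGap X (M + 1) := mixGap_succ hXS hM
  have hS1 : ∀ k, 1 ≤ Sval π α k := one_le_Sval π hYne hα
  have hSpos : ∀ k, 0 < Sval π α k := fun k => lt_of_lt_of_le one_pos (hS1 k)
  have hsubadd : Subadditive (fun k => Real.log (Sval π α k)) := by
    intro a b
    calc Real.log (Sval π α (a + b)) ≤ Real.log (Sval π α a * Sval π α b) :=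
        Real.log_le_log (hSpos _) (Sval_subadd π hα a b)
      _ = Real.log (Sval π α a) + Real.log (Sval π α b) :=
        Real.log_mul (hSpos a).ne' (hSpos b).ne'
  have hbdd : BddBelow (Set.range fun k : ℕ => Real.log (Sval π α k) / k) := by
    refine ⟨0, ?_⟩
    rintro x ⟨k, rfl⟩
    exact div_nonneg (Real.log_nonneg (hS1 k)) (Nat.cast_nonneg k)
  have hPlim : P = hsubadd.lim := tendsto_nhds_unique hP (hsubadd.tendsto_lim hbdd)
  have hP0 : 0 ≤ P :=
    ge_of_tendsto' hP fun k => div_nonneg (Real.log_nonneg (hS1 k)) (Nat.cast_nonneg k)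
  have hSlow : ∀ k : ℕ, 0 < k → Real.exp ((k : ℝ) * P) ≤ Sval π α k := by
    intro k hk
    have h1 : P ≤ Real.log (Sval π α k) / k := by
      rw [hPlim]
      exact hsubadd.lim_le_div hbdd (by omega)
    have hkpos : (0:ℝ) < k := by exact_mod_cast hk
    have h2 : (k : ℝ) * P ≤ Real.log (Sval π α k) := by
      calc (k:ℝ) * P ≤ (k:ℝ) * (Real.log (Sval π α k) / k) :=
            mul_le_mul_of_nonneg_left h1 hkpos.le
        _ = Real.log (Sval π α k) := by field_simp
    calc Real.exp ((k:ℝ) * P) ≤ Real.exp (Real.log (Sval π α k)) := Real.exp_le_exp.mpr h2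
      _ = Sval π α k := Real.exp_log (hSpos k)
  have hShigh : ∀ k : ℕ, 0 < k → Sval π α k ≤ Real.exp (((k : ℝ) + M) * P) := by
    intro k hk
    have hpow : ∀ j : ℕ, Sval π α k ^ (j + 1) ≤ Sval π α (k + j * (M + k)) := by
      intro j
      induction j with
      | zero => simp
      | succ j ih =>
        calc Sval π α k ^ (j + 1 + 1) = Sval π α k ^ (j + 1) * Sval π α k := pow_succ _ _
          _ ≤ Sval π α (k + j * (M + k)) * Sval π α k :=
              mul_le_mul_of_nonneg_right ih (Sval_nonneg π k)
          _ ≤ Sval π α ((k + j * (M + k)) + (M + k)) :=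
              Sval_superadd π hXS hGap hα (by omega) hk
          _ = Sval π α (k + (j + 1) * (M + k)) := by
              congr 1
              ring
    have hlog : ∀ j : ℕ, Real.log (Sval π α k)
        ≤ Real.log (Sval π α (k + j * (M + k))) / ((j : ℝ) + 1) := by
      intro j
      rw [le_div_iff₀ (by positivity : (0:ℝ) < (j:ℝ) + 1)]
      have h1 := Real.log_le_log (pow_pos (hSpos k) (j + 1)) (hpow j)
      rw [Real.log_pow] at h1
      calc Real.log (Sval π α k) * ((j:ℝ) + 1)
          = ((j + 1 : ℕ) : ℝ) * Real.log (Sval π α k) := by push_cast; ring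
        _ ≤ _ := h1
    have hNtend : Filter.Tendsto (fun j : ℕ => k + j * (M + k)) Filter.atTop Filter.atTop := by
      refine Filter.tendsto_atTop_mono (fun j => ?_) Filter.tendsto_id
      have h : j * 1 ≤ j * (M + k) := Nat.mul_le_mul_left j (by omega)
      show j ≤ k + j * (M + k)
      omega
    have h1 : Filter.Tendsto
        (fun j : ℕ => Real.log (Sval π α (k + j * (M + k))) / ((k + j * (M + k) : ℕ) : ℝ))
        Filter.atTop (nhds P) := hP.comp hNtend
    have h2 : Filter.Tendsto (fun j : ℕ => (((k + j * (M + k) : ℕ) : ℝ)) / ((j : ℝ) + 1))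
        Filter.atTop (nhds ((M : ℝ) + k)) := by
      have h3 : Filter.Tendsto
          (fun j : ℕ => ((M : ℝ) + k) + ((k : ℝ) - ((M : ℝ) + k)) * (1 / ((j : ℝ) + 1)))
          Filter.atTop (nhds (((M : ℝ) + k) + ((k : ℝ) - ((M : ℝ) + k)) * 0)) :=
        tendsto_const_nhds.add (tendsto_const_nhds.mul tendsto_one_div_add_atTop_nhds_zero_nat)
      rw [mul_zero, add_zero] at h3
      refine h3.congr fun j => ?_
      have hj : ((j : ℝ) + 1) ≠ 0 := by positivity
      push_cast
      field_simp
      ring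
    have h4 : Filter.Tendsto (fun j : ℕ => Real.log (Sval π α (k + j * (M + k))) / ((j : ℝ) + 1))
        Filter.atTop (nhds (P * ((M : ℝ) + k))) := by
      have h5 := h1.mul h2
      refine h5.congr fun j => ?_
      have hNj : (((k + j * (M + k) : ℕ) : ℝ)) ≠ 0 := by
        have h : 0 < k + j * (M + k) := by omega
        exact_mod_cast h.ne'
      field_simp
    have h6 : Real.log (Sval π α k) ≤ P * ((M : ℝ) + k) := ge_of_tendsto' h4 hlog
    calc Sval π α k = Real.exp (Real.log (Sval π α k)) := (Real.exp_log (hSpos k)).symm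
      _ ≤ Real.exp (P * ((M : ℝ) + k)) := Real.exp_le_exp.mpr h6
      _ = Real.exp (((k : ℝ) + M) * P) := by ring_nf
  refine ⟨Real.exp (-(2 * (M : ℝ)) * P), Real.exp ((M : ℝ) * P),
    Real.exp_pos _, Real.exp_pos _, ?_⟩
  intro l n hn hl v hv
  obtain ⟨m', rfl⟩ : ∃ m', l = n + (M + m') := ⟨l - n - M, by omega⟩
  have hm' : 0 < m' := by omega
  have hnum : ((ν (n + (M + m'))).toMeasure (cyl Y v)).toReal
      = (∑ u : Fin (M + m') → B, ((preCnt π (wcat v u) : ℝ)) ^ (1 / (α + 1) : ℝ))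
        / Sval π α (n + (M + m')) := by
    rw [meas_cyl_decomp (ν (n + (M + m'))) (m := M + m') v, Finset.sum_div]
    exact Finset.sum_congr rfl fun u _ => hν (n + (M + m')) (by omega) (wcat v u)
  have hFv1 : (1:ℝ) ≤ ((preCnt π v : ℝ)) ^ (1 / (α + 1) : ℝ) := by
    have h1 : 1 ≤ preCnt π v := one_le_preCnt π hv
    calc (1:ℝ) = (1:ℝ) ^ (1 / (α + 1) : ℝ) := (Real.one_rpow _).symm
      _ ≤ _ := Real.rpow_le_rpow zero_le_one (by exact_mod_cast h1) hθ0.le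
  have hFvpos : 0 < ((preCnt π v : ℝ)) ^ (1 / (α + 1) : ℝ) := lt_of_lt_of_le one_pos hFv1
  have hDpos : 0 < Real.exp (-(n : ℝ) * P) * ((preCnt π v : ℝ)) ^ (1 / (α + 1) : ℝ) :=
    mul_pos (Real.exp_pos _) hFvpos
  have hSigLow : ((preCnt π v : ℝ)) ^ (1 / (α + 1) : ℝ) * Sval π α m'
      ≤ ∑ u : Fin (M + m') → B, ((preCnt π (wcat v u) : ℝ)) ^ (1 / (α + 1) : ℝ) :=
    glue_sum π hXS hGap hα hn hm' v
  have hSigUp : (∑ u : Fin (M + m') → B, ((preCnt π (wcat v u) : ℝ)) ^ (1 / (α + 1) : ℝ))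
      ≤ ((preCnt π v : ℝ)) ^ (1 / (α + 1) : ℝ) * Sval π α (M + m') := by
    have hSdef : Sval π α (M + m')
        = ∑ u : Fin (M + m') → B, ((preCnt π u : ℝ)) ^ (1 / (α + 1) : ℝ) := rfl
    rw [hSdef, Finset.mul_sum]
    refine Finset.sum_le_sum fun u _ => ?_
    calc ((preCnt π (wcat v u) : ℝ)) ^ (1 / (α + 1) : ℝ)
        ≤ ((preCnt π v * preCnt π u : ℕ) : ℝ) ^ (1 / (α + 1) : ℝ) :=
          Real.rpow_le_rpow (Nat.cast_nonneg _) (by exact_mod_cast preCnt_wcat_le π v u) hθ0.le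
      _ = ((preCnt π v : ℝ)) ^ (1 / (α + 1) : ℝ) * ((preCnt π u : ℝ)) ^ (1 / (α + 1) : ℝ) := by
          push_cast
          exact Real.mul_rpow (Nat.cast_nonneg _) (Nat.cast_nonneg _)
  have hSigNN : 0 ≤ ∑ u : Fin (M + m') → B, ((preCnt π (wcat v u) : ℝ)) ^ (1 / (α + 1) : ℝ) :=
    Finset.sum_nonneg fun u _ => Real.rpow_nonneg (Nat.cast_nonneg _) _
  have hexp : ∀ x y : ℝ, Real.exp x * Real.exp y = Real.exp (x + y) :=
    fun x y => (Real.exp_add x y).symm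
  constructor
  · rw [le_div_iff₀ hDpos, hnum]
    have key : Real.exp (-(2 * (M : ℝ)) * P)
          * (Real.exp (-(n : ℝ) * P) * ((preCnt π v : ℝ)) ^ (1 / (α + 1) : ℝ))
        = (((preCnt π v : ℝ)) ^ (1 / (α + 1) : ℝ) * Real.exp ((m' : ℝ) * P))
          / Real.exp ((((n + (M + m') : ℕ) : ℝ) + M) * P) := by
      rw [eq_div_iff (Real.exp_ne_zero _)]
      calc Real.exp (-(2 * (M : ℝ)) * P)
            * (Real.exp (-(n : ℝ) * P) * ((preCnt π v : ℝ)) ^ (1 / (α + 1) : ℝ))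
            * Real.exp ((((n + (M + m') : ℕ) : ℝ) + M) * P)
          = ((preCnt π v : ℝ)) ^ (1 / (α + 1) : ℝ)
            * (Real.exp (-(2 * (M : ℝ)) * P) * Real.exp (-(n : ℝ) * P)
              * Real.exp ((((n + (M + m') : ℕ) : ℝ) + M) * P)) := by ring
        _ = ((preCnt π v : ℝ)) ^ (1 / (α + 1) : ℝ)
            * Real.exp (-(2 * (M : ℝ)) * P + -(n : ℝ) * P
              + (((n + (M + m') : ℕ) : ℝ) + M) * P) := by rw [hexp, hexp]
        _ = ((preCnt π v : ℝ)) ^ (1 / (α + 1) : ℝ) * Real.exp ((m' : ℝ) * P) := by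
            congr 1
            push_cast
            ring
    rw [key]
    refine div_le_div₀ hSigNN ?_ (hSpos _) (hShigh (n + (M + m')) (by omega))
    exact (mul_le_mul_of_nonneg_left (hSlow m' hm') hFvpos.le).trans hSigLow
  · rw [div_le_iff₀ hDpos, hnum]
    have key : Real.exp ((M : ℝ) * P)
          * (Real.exp (-(n : ℝ) * P) * ((preCnt π v : ℝ)) ^ (1 / (α + 1) : ℝ))
        = (((preCnt π v : ℝ)) ^ (1 / (α + 1) : ℝ)
            * Real.exp ((((M + m' : ℕ) : ℝ) + M) * P))
          / Real.exp (((n + (M + m') : ℕ) : ℝ) * P) := by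
      rw [eq_div_iff (Real.exp_ne_zero _)]
      calc Real.exp ((M : ℝ) * P)
            * (Real.exp (-(n : ℝ) * P) * ((preCnt π v : ℝ)) ^ (1 / (α + 1) : ℝ))
            * Real.exp (((n + (M + m') : ℕ) : ℝ) * P)
          = ((preCnt π v : ℝ)) ^ (1 / (α + 1) : ℝ)
            * (Real.exp ((M : ℝ) * P) * Real.exp (-(n : ℝ) * P)
              * Real.exp (((n + (M + m') : ℕ) : ℝ) * P)) := by ring
        _ = ((preCnt π v : ℝ)) ^ (1 / (α + 1) : ℝ)
            * Real.exp ((M : ℝ) * P + -(n : ℝ) * P + ((n + (M + m') : ℕ) : ℝ) * P) := by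
            rw [hexp, hexp]
        _ = ((preCnt π v : ℝ)) ^ (1 / (α + 1) : ℝ)
            * Real.exp ((((M + m' : ℕ) : ℝ) + M) * P) := by
            congr 1
            push_cast
            ring
    rw [key]
    refine div_le_div₀ (by positivity) ?_ (Real.exp_pos _) (hSlow (n + (M + m')) (by omega))
    exact hSigUp.trans (mul_le_mul_of_nonneg_left (hShigh (M + m') (by omega)) hFvpos.le)

end Paper
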